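/- (Reconstruction for the NMBR construction.) Let q be a prime power, m, k, d, n positive integers with k ≤ d ≤ n−1, θ : F_{q^m} → M_m(F_q) an injective ring homomorphism, and γ_1, …, γ_n pairwise distinct elements of F_{q^m}. For j ∈ {1,…,n}, let M_j = ( θ(γ_j^0) | θ(γ_j^1) | ⋯ | θ(γ_j^{d−1}) ) ∈ F_q^{m×md}. Suppose X and X' are md×md matrices over F_q of the block form X = [[S, T],[Tᵀ, 0]] and X' = [[S', T'],[T'ᵀ, 0]], where S, S' ∈ F_q^{mk×mk} are symmetric and T, T' ∈ F_q^{mk×m(d−k)}. Then for every subset K ⊆ {1,…,n} with |K| = k: if M_j·X = M_j·X' for all j ∈ K, then S = S' and T = T'. (Hence the file is determined by the contents of any k storage nodes.) -/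
import Mathlib


open Matrix

/-- The block-Vandermonde encoding row of the NMBR construction, with its
columns split into a first group of `k` blocks (powers `0,…,k-1`) and a second
group of `e = d - k` blocks (powers `k,…,d-1`):
`( θ(g^0) | ⋯ | θ(g^(k-1)) ‖ θ(g^k) | ⋯ | θ(g^(d-1)) )`. -/
def nmbrRowSplit {F E : Type*} [Semiring F] [Semiring E] {m k e : ℕ}
    (θ : E →+* Matrix (Fin m) (Fin m) F) (g : E) :
    Matrix (Fin m) ((Fin k × Fin m) ⊕ (Fin e × Fin m)) F :=
  fun a p =>
    match p with
    | Sum.inl r => θ (g ^ (r.1 : ℕ)) a r.2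
    | Sum.inr r => θ (g ^ (k + (r.1 : ℕ))) a r.2

theorem stmt7 (q m k d n : ℕ) (hq : IsPrimePow q) (hm : 0 < m) (hk : 0 < k)
    (hkd : k ≤ d) (hn : 0 < n) (hdn : d ≤ n - 1)
    (F E : Type*) [Field F] [Field E] [Fintype F] [Fintype E]
    (hF : Fintype.card F = q) (hE : Fintype.card E = q ^ m)
    (θ : E →+* Matrix (Fin m) (Fin m) F) (hθ : Function.Injective θ)
    (γ : Fin n → E) (hγ : Function.Injective γ)
    (S S' : Matrix (Fin k × Fin m) (Fin k × Fin m) F)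
    (hS : S.IsSymm) (hS' : S'.IsSymm)
    (T T' : Matrix (Fin k × Fin m) (Fin (d - k) × Fin m) F)
    (Kset : Finset (Fin n)) (hKset : Kset.card = k)
    (h : ∀ j ∈ Kset,
      nmbrRowSplit (k := k) (e := d - k) θ (γ j) * Matrix.fromBlocks S T Tᵀ 0 =
        nmbrRowSplit (k := k) (e := d - k) θ (γ j) * Matrix.fromBlocks S' T' T'ᵀ 0) :
    S = S' ∧ T = T' := by
  classical
  -- enumerate the helper set
  let σ : Fin k → Fin n := fun j => ((Kset.orderIsoOfFin hKset j : {x // x ∈ Kset}) : Fin n)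
  have hσmem : ∀ j, σ j ∈ Kset := fun j => (Kset.orderIsoOfFin hKset j).2
  have hσinj : Function.Injective σ := fun a b hab =>
    (Kset.orderIsoOfFin hKset).injective (Subtype.ext hab)
  -- the block Vandermonde matrix
  let V : Matrix (Fin k) (Fin k) E := Matrix.vandermonde (fun j => γ (σ j))
  let Ψ : Matrix (Fin k × Fin m) (Fin k × Fin m) F :=
    Matrix.compRingEquiv (Fin k) (Fin m) F (θ.mapMatrix V)
  have hΨ : ∀ (j i : Fin k) (a b : Fin m), Ψ (j, a) (i, b) = θ (γ (σ j) ^ (i : ℕ)) a b :=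
    fun j i a b => rfl
  have hVunit : IsUnit V := by
    rw [Matrix.isUnit_iff_isUnit_det]
    exact (Matrix.det_vandermonde_ne_zero_iff.mpr (hγ.comp hσinj)).isUnit
  have hΨunit : IsUnit Ψ :=
    hVunit.map ((Matrix.compRingEquiv (Fin k) (Fin m) F).toRingHom.comp θ.mapMatrix)
  have hΨdet : IsUnit Ψ.det := (Matrix.isUnit_iff_isUnit_det Ψ).mp hΨunit
  -- the difference matrix is killed by each row
  have hz : ∀ j : Fin k, nmbrRowSplit (k := k) (e := d - k) θ (γ (σ j)) *
      (Matrix.fromBlocks (S - S') (T - T') (T - T')ᵀ 0) = 0 := by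
    intro j
    have h1 := h (σ j) (hσmem j)
    have h2 : nmbrRowSplit (k := k) (e := d - k) θ (γ (σ j)) *
        (Matrix.fromBlocks S T Tᵀ 0 - Matrix.fromBlocks S' T' T'ᵀ 0) = 0 := by
      rw [Matrix.mul_sub, h1, sub_self]
    have h3 : Matrix.fromBlocks S T Tᵀ 0 - Matrix.fromBlocks S' T' T'ᵀ 0 =
        Matrix.fromBlocks (S - S') (T - T') (T - T')ᵀ 0 := by
      ext a p
      rcases a with a | a <;> rcases p with p | p <;>
        simp [Matrix.fromBlocks, Matrix.transpose_sub, Matrix.sub_apply]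
    rwa [h3] at h2
  -- first conclude T = T'
  have hUT : Ψ * (T - T') = 0 := by
    ext ⟨j, a⟩ ⟨r, b⟩
    have := congrFun (congrFun (hz j) a) (Sum.inr (r, b))
    simp only [Matrix.mul_apply, nmbrRowSplit, Matrix.fromBlocks_apply₁₂,
      Matrix.fromBlocks_apply₂₂, Fintype.sum_sum_type, Matrix.zero_apply, mul_zero,
      Finset.sum_const_zero, add_zero] at this ⊢
    rw [← this]
    exact Finset.sum_congr rfl fun p _ => by rw [hΨ j p.1 a p.2]
  have hT : T = T' := by
    have : T - T' = Ψ⁻¹ * (Ψ * (T - T')) := by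
      rw [← Matrix.mul_assoc, Matrix.nonsing_inv_mul _ hΨdet, Matrix.one_mul]
    rw [hUT, Matrix.mul_zero] at this
    exact sub_eq_zero.mp this
  -- then conclude S = S'
  have hUS : Ψ * (S - S') = 0 := by
    ext ⟨j, a⟩ ⟨i, b⟩
    have := congrFun (congrFun (hz j) a) (Sum.inl (i, b))
    rw [hT, sub_self] at this
    simp only [Matrix.mul_apply, nmbrRowSplit, Matrix.fromBlocks_apply₁₁,
      Matrix.fromBlocks_apply₂₁, Fintype.sum_sum_type, Matrix.transpose_zero,
      Matrix.zero_apply, mul_zero, Finset.sum_const_zero, add_zero] at this ⊢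
    rw [← this]
    exact Finset.sum_congr rfl fun p _ => by rw [hΨ j p.1 a p.2]
  have hSeq : S = S' := by
    have : S - S' = Ψ⁻¹ * (Ψ * (S - S')) := by
      rw [← Matrix.mul_assoc, Matrix.nonsing_inv_mul _ hΨdet, Matrix.one_mul]
    rw [hUS, Matrix.mul_zero] at this
    exact sub_eq_zero.mp this
  exact ⟨hSeq, hT⟩
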